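/- Let d ≥ 1, let f : ℝ^d → ℝ be continuously differentiable with L-Lipschitz-continuous gradient (L > 0), let R = [a₁,b₁] × … × [a_d,b_d] be a full-dimensional hyperrectangle in ℝ^d, let x ∈ R, and let ε > 0. If every point y ∈ ∂R is (ε/2)-unreachable from x, and max_i (b_i − a_i) ≤ ε/(2√d · L), then x is an ε-stationary point of f, i.e., ‖∇f(x)‖₂ ≤ ε. -/

import Mathlib

set_option maxHeartbeats 1000000


/-- If every boundary point of a small enough full-dimensional
hyperrectangle `R` is `(ε/2)`-unreachable from `x ∈ R`, and each side length is
at most `ε/(2√d·L)`, then `x` itself is an `ε`-stationary point of `f`. -/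
theorem small_box_unreachable_implies_x_stationary
    (d : ℕ) (hd : 1 ≤ d) (L : ℝ) (hL : 0 < L)
    (f : EuclideanSpace ℝ (Fin d) → ℝ)
    (hf : ContDiff ℝ 1 f)
    (hgrad : ∀ x y : EuclideanSpace ℝ (Fin d),
      ‖gradient f x - gradient f y‖ ≤ L * ‖x - y‖)
    (a b : Fin d → ℝ) (hab : ∀ i, a i < b i)
    (R : Set (EuclideanSpace ℝ (Fin d)))
    (hR : R = {y | ∀ i, a i ≤ y i ∧ y i ≤ b i})
    (x : EuclideanSpace ℝ (Fin d)) (hx : x ∈ R)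
    (ε : ℝ) (hε : 0 < ε)
    (hside : ∀ i, b i - a i ≤ ε / (2 * Real.sqrt d * L))
    (hunreach : ∀ y ∈ frontier R, f y > f x - (ε / 2) * ‖x - y‖) :
    ‖gradient f x‖ ≤ ε := by
  by_contra hcon
  push_neg at hcon
  set g := gradient f x with hg
  have hgpos : (0:ℝ) < ‖g‖ := lt_trans hε hcon
  -- R is closed
  have hRclosed : IsClosed R := by
    rw [hR]
    have heq : {y : EuclideanSpace ℝ (Fin d) | ∀ i, a i ≤ y i ∧ y i ≤ b i}
        = ⋂ i, (fun y : EuclideanSpace ℝ (Fin d) => y i) ⁻¹' Set.Icc (a i) (b i) := by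
      ext y; simp [Set.mem_Icc, Set.mem_iInter]
    rw [heq]
    exact isClosed_iInter fun i =>
      isClosed_Icc.preimage (EuclideanSpace.proj (𝕜 := ℝ) i).continuous
  have hdpos : (0:ℝ) < Real.sqrt d := Real.sqrt_pos.mpr (by exact_mod_cast hd)
  have hMpos : (0:ℝ) < ε / (2 * Real.sqrt d * L) := by positivity
  -- diameter bound
  have hD : ∀ z ∈ R, ∀ w ∈ R, ‖z - w‖ ≤ ε / (2 * L) := by
    intro z hz w hw
    rw [hR] at hz hw
    set M : ℝ := ε / (2 * Real.sqrt d * L) with hM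
    have h1 : ‖z - w‖ ≤ Real.sqrt d * M := by
      rw [EuclideanSpace.norm_eq]
      have hterm : ∀ i, ‖(z - w) i‖ ^ 2 ≤ M ^ 2 := by
        intro i
        have hzi := hz i; have hwi := hw i
        have habs : |z i - w i| ≤ b i - a i := by
          rw [abs_sub_le_iff]; constructor <;> linarith [hzi.1, hzi.2, hwi.1, hwi.2]
        have habs2 : |z i - w i| ≤ M := le_trans habs (hside i)
        have hzw : (z - w) i = z i - w i := rfl
        calc ‖(z - w) i‖ ^ 2 = |z i - w i| ^ 2 := by rw [hzw, Real.norm_eq_abs]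
          _ ≤ M ^ 2 := by
              apply pow_le_pow_left₀ (abs_nonneg _) habs2
      have hsum : ∑ i, ‖(z - w) i‖ ^ 2 ≤ (d : ℝ) * M ^ 2 := by
        calc ∑ i, ‖(z - w) i‖ ^ 2 ≤ ∑ _i : Fin d, M ^ 2 :=
              Finset.sum_le_sum fun i _ => hterm i
          _ = (d : ℝ) * M ^ 2 := by simp [mul_comm]
      calc Real.sqrt (∑ i, ‖(z - w) i‖ ^ 2) ≤ Real.sqrt ((d : ℝ) * M ^ 2) :=
            Real.sqrt_le_sqrt hsum
        _ = Real.sqrt d * M := by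
            rw [Real.sqrt_mul (by positivity), Real.sqrt_sq hMpos.le]
    have h2 : Real.sqrt d * M = ε / (2 * L) := by
      rw [hM]; field_simp
    linarith
  -- x is not on the frontier
  have hxfront : x ∉ frontier R := by
    intro hxf
    have := hunreach x hxf
    simp at this
  have hxint : x ∈ interior R := by
    by_contra hni
    exact hxfront ⟨by rw [hRclosed.closure_eq]; exact hx, hni⟩
  -- the unit descent direction
  set u : EuclideanSpace ℝ (Fin d) := (-‖g‖⁻¹) • g with hu
  have hunorm : ‖u‖ = 1 := by
    rw [hu, norm_smul, norm_neg, norm_inv, norm_norm, inv_mul_cancel₀ hgpos.ne']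
  -- the set of admissible step sizes
  set S : Set ℝ := Set.Ici (0:ℝ) ∩ (fun s : ℝ => x + s • u) ⁻¹' R with hS
  have hS0 : (0:ℝ) ∈ S := by
    constructor
    · exact Set.self_mem_Ici
    · show x + (0:ℝ) • u ∈ R; simpa using hx
  have hnormstep : ∀ s : ℝ, 0 ≤ s → ‖(x + s • u) - x‖ = s := by
    intro s hs
    rw [add_sub_cancel_left, norm_smul, hunorm, Real.norm_eq_abs, abs_of_nonneg hs, mul_one]
  have hSbdd : BddAbove S := by
    refine ⟨ε / (2 * L), fun s hs => ?_⟩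
    have := hD _ hs.2 x hx
    rwa [hnormstep s hs.1] at this
  have hSclosed : IsClosed S := by
    apply IsClosed.inter isClosed_Ici
    apply hRclosed.preimage
    exact continuous_const.add (continuous_id.smul continuous_const)
  set t : ℝ := sSup S with htdef
  have htS : t ∈ S := hSclosed.csSup_mem ⟨0, hS0⟩ hSbdd
  have ht0 : 0 ≤ t := htS.1
  set y : EuclideanSpace ℝ (Fin d) := x + t • u with hy
  have hyR : y ∈ R := htS.2
  -- t is positive
  have htpos : 0 < t := by
    rcases Metric.mem_nhds_iff.mp (mem_interior_iff_mem_nhds.mp hxint) with ⟨δ, hδ, hball⟩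
    have hmem : δ / 2 ∈ S := by
      refine ⟨Set.mem_Ici.mpr (by positivity), hball ?_⟩
      rw [Metric.mem_ball, dist_eq_norm, hnormstep _ (by positivity)]
      linarith
    have := le_csSup hSbdd hmem
    linarith
  -- y is on the frontier
  have hyfront : y ∈ frontier R := by
    refine ⟨by rw [hRclosed.closure_eq]; exact hyR, ?_⟩
    intro hyint
    rcases Metric.mem_nhds_iff.mp (mem_interior_iff_mem_nhds.mp hyint) with ⟨δ, hδ, hball⟩
    have hmem : t + δ / 2 ∈ S := by
      refine ⟨Set.mem_Ici.mpr (by positivity), hball ?_⟩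
      rw [Metric.mem_ball, dist_eq_norm]
      have : x + (t + δ / 2) • u - y = (δ / 2) • u := by
        rw [hy]; module
      rw [this, norm_smul, hunorm, Real.norm_eq_abs, abs_of_nonneg (by positivity), mul_one]
      linarith
    have := le_csSup hSbdd hmem
    linarith
  have hyx : ‖y - x‖ = t := by rw [hy]; exact hnormstep t ht0
  have hxy : ‖x - y‖ = t := by rw [← norm_neg, neg_sub]; exact hyx
  -- differentiability
  have hdiff : Differentiable ℝ f := hf.differentiable one_ne_zero
  have hfd : ∀ z, fderiv ℝ f z
      = InnerProductSpace.toDual ℝ (EuclideanSpace ℝ (Fin d)) (gradient f z) := by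
    intro z
    rw [gradient, (InnerProductSpace.toDual ℝ _).apply_symm_apply]
  -- gradient bound on the segment
  have hbound : ∀ z ∈ segment ℝ x y, ‖fderiv ℝ f z - fderiv ℝ f x‖ ≤ L * t := by
    intro z hz
    rcases hz with ⟨p, q, hp, hq, hpq, rfl⟩
    have hzx : p • x + q • y - x = q • (y - x) := by
      have : p = 1 - q := by linarith
      rw [this]; module
    have hnz : ‖p • x + q • y - x‖ ≤ t := by
      rw [hzx, norm_smul, Real.norm_eq_abs, abs_of_nonneg hq, hyx]
      nlinarith
    calc ‖fderiv ℝ f (p • x + q • y) - fderiv ℝ f x‖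
        = ‖gradient f (p • x + q • y) - gradient f x‖ := by
          rw [hfd, hfd, ← map_sub, (InnerProductSpace.toDual ℝ _).norm_map]
      _ ≤ L * ‖p • x + q • y - x‖ := hgrad _ _
      _ ≤ L * t := by nlinarith
  have hkey := (convex_segment x y).norm_image_sub_le_of_norm_hasFDerivWithin_le'
    (fun z _ => (hdiff z).hasFDerivAt.hasFDerivWithinAt) hbound
    (left_mem_segment ℝ x y) (right_mem_segment ℝ x y)
  -- compute the linear term
  have hlin : (fderiv ℝ f x) (y - x) = -(t * ‖g‖) := by
    rw [hfd, InnerProductSpace.toDual_apply_apply, ← hg]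
    have : y - x = t • u := by rw [hy]; abel
    rw [this, hu, real_inner_smul_right, real_inner_smul_right,
      real_inner_self_eq_norm_sq]
    field_simp
  rw [hlin, hyx] at hkey
  have hkey' : f y - f x + t * ‖g‖ ≤ L * t * t := by
    have h := (abs_le.mp (by rwa [Real.norm_eq_abs] at hkey)).2
    linarith
  have htle : t ≤ ε / (2 * L) := by
    have := hD y hyR x hx
    rwa [hyx] at this
  have hLt : L * t ≤ ε / 2 := by
    have h1 : L * t ≤ L * (ε / (2 * L)) := by nlinarith
    have h2 : L * (ε / (2 * L)) = ε / 2 := by field_simp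
    linarith
  have hun := hunreach y hyfront
  rw [hxy] at hun
  nlinarith [mul_lt_mul_of_pos_left hcon htpos, mul_le_mul_of_nonneg_right hLt ht0]
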